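/- Under the stated assumptions, with Σ = σ₀²I_n + VDV' the covariance matrix of the FDSLRM observation, the matrix T̂ = Ŵ⁻¹V'M_F satisfies T̂ΣT̂' = D − σ₀²Ŵ⁻¹ = D(I_l − σ₀²Û⁻¹). -/

import Mathlib

open Matrix

/-- Lemma (basic properties of T̂), part (3):
`T̂ΣT̂' = D − σ₀²Ŵ⁻¹ = D(I_l − σ₀²Û⁻¹)` where `Σ = σ₀²I_n + VDV'`. -/
theorem stmt_2 {n k l : ℕ} (hn : 0 < n) (hk : 0 < k) (hl : 0 < l)
    (hnkl : k + l < n)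
    (F : Matrix (Fin n) (Fin k) ℝ) (V : Matrix (Fin n) (Fin l) ℝ)
    (hrank : (Matrix.fromCols F V).rank = k + l)
    (σ0 : ℝ) (hσ0 : 0 < σ0)
    (σ : Fin l → ℝ) (hσ : ∀ j, 0 < σ j)
    (D : Matrix (Fin l) (Fin l) ℝ) (hD : D = Matrix.diagonal σ)
    (Mf : Matrix (Fin n) (Fin n) ℝ) (hMf : Mf = 1 - F * (Fᵀ * F)⁻¹ * Fᵀ)
    (W : Matrix (Fin l) (Fin l) ℝ) (hW : W = Vᵀ * Mf * V)
    (What : Matrix (Fin l) (Fin l) ℝ) (hWhat : What = W + σ0 • D⁻¹)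
    (Uhat : Matrix (Fin l) (Fin l) ℝ) (hUhat : Uhat = W * D + σ0 • (1 : Matrix (Fin l) (Fin l) ℝ))
    (That : Matrix (Fin l) (Fin n) ℝ) (hThat : That = What⁻¹ * Vᵀ * Mf)
    (Sigma : Matrix (Fin n) (Fin n) ℝ)
    (hSigma : Sigma = σ0 • (1 : Matrix (Fin n) (Fin n) ℝ) + V * D * Vᵀ) :
    That * Sigma * Thatᵀ = D - σ0 • What⁻¹ ∧
    That * Sigma * Thatᵀ = D * ((1 : Matrix (Fin l) (Fin l) ℝ) - σ0 • Uhat⁻¹) := by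
  -- injectivity of the full design matrix
  have hinj : Function.Injective (Matrix.fromCols F V).mulVecLin := by
    rw [← LinearMap.ker_eq_bot]
    have h1 := LinearMap.finrank_range_add_finrank_ker (Matrix.fromCols F V).mulVecLin
    rw [Matrix.rank] at hrank
    rw [hrank] at h1
    have h2 : Module.finrank ℝ ((Fin k ⊕ Fin l) → ℝ) = k + l := by
      simp [Module.finrank_pi]
    rw [h2] at h1
    have h3 : Module.finrank ℝ (LinearMap.ker (Matrix.fromCols F V).mulVecLin) = 0 := by
      omega
    exact Submodule.finrank_eq_zero.mp h3
  have hFinj : ∀ x : Fin k → ℝ, F *ᵥ x = 0 → x = 0 := by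
    intro x hx
    have h0 : (Matrix.fromCols F V).mulVecLin (Sum.elim x 0) =
        (Matrix.fromCols F V).mulVecLin 0 := by
      simp [Matrix.mulVecLin_apply, Matrix.fromCols_mulVec_sumElim, hx]
    have := hinj h0
    funext i
    exact congrFun this (Sum.inl i)
  -- Fᵀ * F is invertible
  have hdet : IsUnit (Fᵀ * F).det := by
    rw [isUnit_iff_ne_zero]
    intro h
    obtain ⟨v, hv, hv0⟩ := Matrix.exists_mulVec_eq_zero_iff.mpr h
    apply hv
    apply hFinj
    have h1 := Matrix.conjTranspose_mul_self_mulVec_eq_zero F v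
    rw [Matrix.conjTranspose_eq_transpose_of_trivial] at h1
    exact h1.mp hv0
  have hinvFtF : (Fᵀ * F)⁻¹ * (Fᵀ * F) = 1 := Matrix.nonsing_inv_mul _ hdet
  -- basic facts about Mf
  have hMfT : Mfᵀ = Mf := by
    rw [hMf]
    simp [Matrix.transpose_sub, Matrix.transpose_mul, Matrix.transpose_nonsing_inv,
      Matrix.mul_assoc]
  have hMfF : Mf * F = 0 := by
    rw [hMf, Matrix.sub_mul, Matrix.one_mul, Matrix.mul_assoc (F * (Fᵀ * F)⁻¹) Fᵀ F,
      Matrix.mul_assoc F (Fᵀ * F)⁻¹ (Fᵀ * F), hinvFtF, Matrix.mul_one, sub_self]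
  have hMf2 : Mf * Mf = Mf := by
    nth_rewrite 2 [hMf]
    rw [Matrix.mul_sub, Matrix.mul_one, ← Matrix.mul_assoc, ← Matrix.mul_assoc, hMfF,
      Matrix.zero_mul, Matrix.zero_mul, sub_zero]
  -- W is positive semidefinite
  have hWeq : W = (Mf * V)ᴴ * (Mf * V) := by
    rw [Matrix.conjTranspose_eq_transpose_of_trivial, Matrix.transpose_mul, hMfT, hW,
      ← Matrix.mul_assoc (Vᵀ * Mf) Mf V, Matrix.mul_assoc Vᵀ Mf Mf, hMf2]
  have hWpsd : W.PosSemidef := hWeq ▸ Matrix.posSemidef_conjTranspose_mul_self (Mf * V)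
  -- D and D⁻¹
  have hDdet : IsUnit D.det := by
    rw [hD, Matrix.det_diagonal]
    exact (Finset.prod_pos fun j _ => hσ j).ne'.isUnit
  have hDpd : D.PosDef := hD ▸ Matrix.PosDef.diagonal hσ
  have hDDinv : D * D⁻¹ = 1 := Matrix.mul_nonsing_inv _ hDdet
  have hDinvD : D⁻¹ * D = 1 := Matrix.nonsing_inv_mul _ hDdet
  -- What is positive definite, hence invertible
  have hWhatPD : What.PosDef := by
    rw [hWhat]
    refine Matrix.PosDef.posSemidef_add hWpsd ?_
    have hDipd : D⁻¹.PosDef := hDpd.inv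
    refine ⟨?_, fun x hx => ?_⟩
    · rw [Matrix.IsHermitian, Matrix.conjTranspose_smul, hDipd.1.eq, star_trivial]
    · exact (hDipd.smul hσ0).2 hx
  have hWhatdet : IsUnit What.det := (Matrix.isUnit_iff_isUnit_det _).mp hWhatPD.isUnit
  have hWhatinv : What⁻¹ * What = 1 := Matrix.nonsing_inv_mul _ hWhatdet
  have hWhatinv' : What * What⁻¹ = 1 := Matrix.mul_nonsing_inv _ hWhatdet
  have hWhatT : Whatᵀ = What := by
    have := hWhatPD.isHermitian
    rwa [Matrix.IsHermitian, Matrix.conjTranspose_eq_transpose_of_trivial] at this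
  have hWhatinvT : What⁻¹ᵀ = What⁻¹ := by
    rw [Matrix.transpose_nonsing_inv, hWhatT]
  -- transpose of That
  have hThatT : Thatᵀ = Mf * (V * What⁻¹) := by
    rw [hThat, Matrix.transpose_mul, Matrix.transpose_mul, hMfT, Matrix.transpose_transpose,
      hWhatinvT]
  -- the key middle computation
  have hkey : Vᵀ * Mf * Sigma * (Mf * V) = What * (D * W) := by
    rw [hSigma, Matrix.mul_add, Matrix.add_mul, Matrix.mul_smul, Matrix.smul_mul,
      Matrix.mul_one]
    have e1 : Vᵀ * Mf * (Mf * V) = W := by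
      rw [← Matrix.mul_assoc, Matrix.mul_assoc Vᵀ Mf Mf, hMf2, hW]
    have e2 : Vᵀ * Mf * (V * D * Vᵀ) * (Mf * V) = W * D * W := by
      rw [hW]
      simp only [Matrix.mul_assoc]
    rw [e1, e2, hWhat, Matrix.add_mul, Matrix.smul_mul, ← Matrix.mul_assoc D⁻¹ D W, hDinvD,
      Matrix.one_mul, ← Matrix.mul_assoc W D W]
    abel
  -- main equality
  have hmain : That * Sigma * Thatᵀ = D - σ0 • What⁻¹ := by
    have h1 : That * Sigma * Thatᵀ = What⁻¹ * (Vᵀ * Mf * Sigma * (Mf * V)) * What⁻¹ := by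
      rw [hThatT, hThat]
      simp only [Matrix.mul_assoc]
    rw [h1, hkey, ← Matrix.mul_assoc, ← Matrix.mul_assoc, hWhatinv, Matrix.one_mul]
    have hWval : W = What - σ0 • D⁻¹ := by rw [hWhat]; abel
    rw [Matrix.mul_assoc, hWval, Matrix.sub_mul, Matrix.mul_sub, Matrix.smul_mul,
      Matrix.mul_smul, hWhatinv', ← Matrix.mul_assoc D D⁻¹ What⁻¹, hDDinv, Matrix.one_mul,
      Matrix.mul_one]
  refine ⟨hmain, ?_⟩
  -- second form via Uhat = What * D
  have hUeq : Uhat = What * D := by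
    rw [hUhat, hWhat, Matrix.add_mul, Matrix.smul_mul, hDinvD]
  have hUinv : Uhat⁻¹ = D⁻¹ * What⁻¹ := by
    rw [hUeq, Matrix.mul_inv_rev]
  rw [hmain, hUinv, Matrix.mul_sub, Matrix.mul_one, Matrix.mul_smul,
    ← Matrix.mul_assoc D D⁻¹ What⁻¹, hDDinv, Matrix.one_mul]
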